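/- For any θ > 0 and any natural number n, the quantity p(n, θ) := ∑_{k=1}^{n+1} C(n+1,k) (−1)^{k+1} / (1 + √(kθ) arctan √(kθ)) satisfies 0 ≤ p(n, θ) ≤ 1 and p(n, θ) is nondecreasing in n. -/

import Mathlib

open Real Finset

namespace CondCov

/-- Backward difference operator. -/
def D (a : ℕ → ℝ) : ℕ → ℝ := fun k => a k - a (k + 1)

lemma D_eq_neg_fwdDiff (a : ℕ → ℝ) : D a = (-1 : ℝ) • fwdDiff 1 a := by
  funext k; simp [D, fwdDiff]

lemma D_iter_eq (a : ℕ → ℝ) (n : ℕ) : D^[n] a = ((-1 : ℝ) ^ n) • (fwdDiff 1)^[n] a := by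
  induction n generalizing a with
  | zero => simp
  | succ n ih =>
    rw [Function.iterate_succ_apply, Function.iterate_succ_apply, D_eq_neg_fwdDiff,
      ih ((-1 : ℝ) • fwdDiff 1 a), fwdDiff_iter_const_smul, smul_smul, pow_succ]

lemma D_iter_eq_sum (a : ℕ → ℝ) (n k : ℕ) :
    D^[n] a k = ∑ j ∈ range (n + 1), (-1 : ℝ) ^ j * (n.choose j : ℝ) * a (k + j) := by
  rw [D_iter_eq]
  have h0 := fwdDiff_iter_eq_sum_shift (1 : ℕ) a n k
  simp only [Pi.smul_apply, h0, smul_eq_mul, Finset.mul_sum, zsmul_eq_mul, smul_mul_assoc]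
  refine Finset.sum_congr rfl fun j hj => ?_
  have hj' : j ≤ n := Nat.lt_succ_iff.mp (Finset.mem_range.mp hj)
  have hsign : (-1 : ℝ) ^ n * (-1 : ℝ) ^ (n - j) = (-1 : ℝ) ^ j := by
    rw [← pow_add]
    have : n + (n - j) = 2 * (n - j) + j := by omega
    rw [this, pow_add, pow_mul]
    norm_num
  push_cast
  rw [mul_one]
  rw [← hsign]
  ring

end CondCov

namespace CondCov

lemma D_add (a b : ℕ → ℝ) : D (a + b) = D a + D b := by
  funext k; simp [D]; ring

lemma D_iter_add (a b : ℕ → ℝ) (n : ℕ) : D^[n] (a + b) = D^[n] a + D^[n] b := by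
  induction n generalizing a b with
  | zero => simp
  | succ n ih => rw [Function.iterate_succ_apply, Function.iterate_succ_apply,
      Function.iterate_succ_apply, D_add, ih]

lemma D_iter_shift (a : ℕ → ℝ) (n k : ℕ) : D^[n] (fun j => a (j + 1)) k = D^[n] a (k + 1) := by
  rw [D_iter_eq_sum, D_iter_eq_sum]
  refine Finset.sum_congr rfl fun j _ => ?_
  rw [show k + j + 1 = k + 1 + j by omega]

lemma D_mul (a b : ℕ → ℝ) : D (a * b) = a * D b + D a * (fun k => b (k + 1)) := by
  funext k; simp [D]; ring

lemma pascal_sum (T : ℕ → ℝ) (n : ℕ) :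
    ∑ j ∈ Finset.range (n + 2), (((n + 1).choose j : ℕ) : ℝ) * T j
      = ∑ j ∈ Finset.range (n + 1), ((n.choose j : ℕ) : ℝ) * T j
        + ∑ j ∈ Finset.range (n + 1), ((n.choose j : ℕ) : ℝ) * T (j + 1) := by
  rw [Finset.sum_range_succ' (fun j => (((n + 1).choose j : ℕ) : ℝ) * T j) (n + 1)]
  have h1 : ∀ j ∈ Finset.range (n + 1),
      (((n + 1).choose (j + 1) : ℕ) : ℝ) * T (j + 1)
        = ((n.choose j : ℕ) : ℝ) * T (j + 1) + ((n.choose (j + 1) : ℕ) : ℝ) * T (j + 1) := by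
    intro j _
    rw [Nat.choose_succ_succ n j]
    push_cast
    ring
  rw [Finset.sum_congr rfl h1, Finset.sum_add_distrib]
  have h2 : ∑ j ∈ Finset.range (n + 1), ((n.choose (j + 1) : ℕ) : ℝ) * T (j + 1)
        + (((n + 1).choose 0 : ℕ) : ℝ) * T 0
      = ∑ j ∈ Finset.range (n + 1), ((n.choose j : ℕ) : ℝ) * T j := by
    rw [show (((n + 1).choose 0 : ℕ) : ℝ) = ((n.choose 0 : ℕ) : ℝ) by simp]
    rw [← Finset.sum_range_succ' (fun j => ((n.choose j : ℕ) : ℝ) * T j) (n + 1)]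
    rw [Finset.sum_range_succ]
    simp [Nat.choose_succ_self]
  rw [add_assoc, h2]
  ring

lemma D_iter_mul (a b : ℕ → ℝ) (n k : ℕ) :
    D^[n] (a * b) k
      = ∑ j ∈ Finset.range (n + 1), (n.choose j : ℝ) * (D^[j] a k * D^[n - j] b (k + j)) := by
  induction n generalizing a b k with
  | zero => simp
  | succ n ih =>
    rw [Function.iterate_succ_apply, D_mul, D_iter_add, Pi.add_apply, ih, ih]
    have h1 : ∀ j ∈ Finset.range (n + 1),
        (n.choose j : ℝ) * (D^[j] a k * D^[n - j] (D b) (k + j))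
          = (n.choose j : ℝ) * ((fun i => D^[i] a k * D^[n + 1 - i] b (k + i)) j) := by
      intro j hj
      have hj' : j ≤ n := Nat.lt_succ_iff.mp (Finset.mem_range.mp hj)
      rw [← Function.iterate_succ_apply]
      simp only []
      rw [show n + 1 - j = (n - j) + 1 by omega]
    have h2 : ∀ j ∈ Finset.range (n + 1),
        (n.choose j : ℝ) * (D^[j] (D a) k * D^[n - j] (fun m => b (m + 1)) (k + j))
          = (n.choose j : ℝ) * ((fun i => D^[i] a k * D^[n + 1 - i] b (k + i)) (j + 1)) := by
      intro j hj
      rw [← Function.iterate_succ_apply, D_iter_shift]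
      show _ = (n.choose j : ℝ) * (D^[j + 1] a k * D^[n + 1 - (j + 1)] b (k + (j + 1)))
      rw [show n + 1 - (j + 1) = n - j by omega, show k + (j + 1) = k + j + 1 by omega]
    rw [Finset.sum_congr rfl h1, Finset.sum_congr rfl h2, ← pascal_sum]

/-- Totally monotone sequence. -/
def TM (a : ℕ → ℝ) : Prop := ∀ n k, 0 ≤ D^[n] a k

lemma TM.add {a b : ℕ → ℝ} (ha : TM a) (hb : TM b) : TM (a + b) := by
  intro n k
  rw [D_iter_add]
  exact add_nonneg (ha n k) (hb n k)

lemma TM.mul {a b : ℕ → ℝ} (ha : TM a) (hb : TM b) : TM (a * b) := by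
  intro n k
  rw [D_iter_mul]
  exact Finset.sum_nonneg fun j _ =>
    mul_nonneg (Nat.cast_nonneg _) (mul_nonneg (ha j k) (hb (n - j) (k + j)))

lemma D_iter_zero (n : ℕ) : D^[n] (fun _ => (0 : ℝ)) = fun _ => (0 : ℝ) := by
  induction n with
  | zero => rfl
  | succ m ihm => rw [Function.iterate_succ_apply, show D (fun _ => (0:ℝ)) = fun _ => (0:ℝ) by
      funext j; simp [D], ihm]

lemma TM.const (c : ℝ) (hc : 0 ≤ c) : TM (fun _ => c) := by
  intro n k
  cases n with
  | zero => simpa using hc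
  | succ n =>
    rw [Function.iterate_succ_apply, show D (fun _ => c) = fun _ => (0:ℝ) by funext j; simp [D],
      D_iter_zero]
  
lemma TM.of_tendsto {f : ℕ → ℕ → ℝ} {a : ℕ → ℝ} (hf : ∀ i, TM (f i))
    (hlim : ∀ k, Filter.Tendsto (fun i => f i k) Filter.atTop (nhds (a k))) : TM a := by
  intro n k
  have h : Filter.Tendsto (fun i => D^[n] (f i) k) Filter.atTop (nhds (D^[n] a k)) := by
    simp only [D_iter_eq_sum]
    exact tendsto_finset_sum _ fun j _ => ((hlim (k + j)).const_mul _)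
  exact le_of_tendsto_of_tendsto' tendsto_const_nhds h fun i => hf i n k

end CondCov

namespace CondCov

lemma prod_pos_aux (c : ℝ) (hc : 0 ≤ c) (k m : ℕ) :
    0 < ∏ j ∈ Finset.range m, (1 + (k + j : ℕ) * c) := by
  refine Finset.prod_pos fun j _ => ?_
  have : (0 : ℝ) ≤ (k + j : ℕ) * c := mul_nonneg (Nat.cast_nonneg _) hc
  linarith

lemma D_iter_invLinear (c : ℝ) (hc : 0 ≤ c) (n : ℕ) : ∀ k : ℕ,
    D^[n] (fun m => 1 / (1 + (m : ℝ) * c)) k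
      = c ^ n * (n.factorial : ℝ) / ∏ j ∈ Finset.range (n + 1), (1 + (k + j : ℕ) * c) := by
  induction n with
  | zero =>
    intro k
    simp
  | succ n ih =>
    intro k
    rw [Function.iterate_succ_apply']
    show D^[n] _ k - D^[n] _ (k + 1) = _
    rw [ih k, ih (k + 1)]
    set A := ∏ j ∈ Finset.range (n + 1), (1 + (k + j : ℕ) * c) with hA
    set B := ∏ j ∈ Finset.range (n + 1), (1 + (k + 1 + j : ℕ) * c) with hB
    have hApos : 0 < A := prod_pos_aux c hc k (n + 1)
    have hBpos : 0 < B := prod_pos_aux c hc (k + 1) (n + 1)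
    have hJ : (0 : ℝ) < 1 + (k + (n + 1) : ℕ) * c := by
      have : (0 : ℝ) ≤ (k + (n + 1) : ℕ) * c := mul_nonneg (Nat.cast_nonneg _) hc
      linarith
    have hR2 : ∏ j ∈ Finset.range (n + 2), (1 + (k + j : ℕ) * c)
        = A * (1 + (k + (n + 1) : ℕ) * c) := by
      rw [Finset.prod_range_succ]
    have hR1 : ∏ j ∈ Finset.range (n + 2), (1 + (k + j : ℕ) * c)
        = B * (1 + (k : ℝ) * c) := by
      rw [Finset.prod_range_succ']
      congr 1
      refine Finset.prod_congr rfl fun j _ => ?_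
      rw [show k + (j + 1) = k + 1 + j by omega]
    have hrel : A * (1 + (k + (n + 1) : ℕ) * c) = B * (1 + (k : ℝ) * c) := by
      rw [← hR2, hR1]
    rw [hR2]
    have hfact : ((n + 1).factorial : ℝ) = (n + 1) * (n.factorial : ℝ) := by
      push_cast [Nat.factorial_succ]; ring
    rw [hfact]
    field_simp
    push_cast at hrel ⊢
    linear_combination (-(c ^ n)) * hrel
end CondCov

namespace CondCov

lemma TM_invLinear (c : ℝ) (hc : 0 ≤ c) : TM (fun m => 1 / (1 + (m : ℝ) * c)) := by
  intro n k
  have : D^[n] (fun m => 1 / (1 + (m : ℝ) * c)) k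
      = c ^ n * (n.factorial : ℝ) / ∏ j ∈ Finset.range (n + 1), (1 + (k + j : ℕ) * c) :=
    D_iter_invLinear c hc n k
  rw [this]
  exact div_nonneg (mul_nonneg (pow_nonneg hc n) (Nat.cast_nonneg _))
    (prod_pos_aux c hc k (n + 1)).le

lemma integral_L (s : ℝ) (hs : 0 ≤ s) {ε : ℝ} (hε : 0 < ε) (hε1 : ε ≤ 1) :
    ∫ t in ε..1, (t ^ 2 * (1 + s * t ^ 2))⁻¹
      = (ε⁻¹ - 1) - (Real.sqrt s * Real.arctan (Real.sqrt s)
          - Real.sqrt s * Real.arctan (ε * Real.sqrt s)) := by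
  have hderiv : ∀ t ∈ Set.uIcc ε (1 : ℝ),
      HasDerivAt (fun u => -u⁻¹ - Real.sqrt s * Real.arctan (u * Real.sqrt s))
        ((t ^ 2 * (1 + s * t ^ 2))⁻¹) t := by
    intro t ht
    rw [Set.uIcc_of_le hε1] at ht
    have ht0 : 0 < t := lt_of_lt_of_le hε ht.1
    have h1 : HasDerivAt (fun u : ℝ => -u⁻¹) ((t ^ 2)⁻¹) t := by
      exact (hasDerivAt_inv ht0.ne').neg.congr_deriv (by ring)
    have h2 : HasDerivAt (fun u : ℝ => Real.arctan (u * Real.sqrt s))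
        ((1 + (t * Real.sqrt s) ^ 2)⁻¹ * Real.sqrt s) t := by
      have := (hasDerivAt_mul_const (Real.sqrt s) (x := t)).arctan
      simpa using this
    have h3 := h1.sub ((h2.const_mul (Real.sqrt s)))
    refine h3.congr_deriv ?_
    have hsq : Real.sqrt s ^ 2 = s := Real.sq_sqrt hs
    have hss : Real.sqrt s * Real.sqrt s = s := Real.mul_self_sqrt hs
    have hpos : (0 : ℝ) < 1 + s * t ^ 2 := by nlinarith
    rw [show (t * Real.sqrt s) ^ 2 = s * t ^ 2 by rw [mul_pow, hsq]; ring]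
    field_simp
    ring_nf
    rw [hsq]; ring
  have hcont : ContinuousOn (fun t : ℝ => (t ^ 2 * (1 + s * t ^ 2))⁻¹) (Set.uIcc ε 1) := by
    refine ContinuousOn.inv₀ (Continuous.continuousOn (by continuity)) ?_
    intro t ht
    rw [Set.uIcc_of_le hε1] at ht
    have ht0 : 0 < t := lt_of_lt_of_le hε ht.1
    have : (0 : ℝ) < 1 + s * t ^ 2 := by nlinarith
    positivity
  have h := intervalIntegral.integral_eq_sub_of_hasDerivAt hderiv hcont.intervalIntegrable
  rw [h]
  rw [one_mul]
  ring

end CondCov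

namespace CondCov

lemma TM_L {θ ε : ℝ} (hθ : 0 < θ) (hε : 0 < ε) (hε1 : ε ≤ 1) :
    TM (fun k : ℕ => ∫ t in ε..1, (t ^ 2 * (1 + (k : ℝ) * θ * t ^ 2))⁻¹) := by
  have hcont : ∀ c : ℝ, 0 ≤ c → ContinuousOn
      (fun t : ℝ => (t ^ 2 * (1 + c * t ^ 2))⁻¹) (Set.uIcc ε 1) := by
    intro c hc
    refine ContinuousOn.inv₀ (Continuous.continuousOn (by continuity)) ?_
    intro t ht
    rw [Set.uIcc_of_le hε1] at ht
    have ht0 : 0 < t := lt_of_lt_of_le hε ht.1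
    have : (0 : ℝ) < 1 + c * t ^ 2 := by nlinarith
    positivity
  have hint : ∀ m : ℕ, IntervalIntegrable
      (fun t : ℝ => (t ^ 2 * (1 + (m : ℝ) * θ * t ^ 2))⁻¹) MeasureTheory.volume ε 1 :=
    fun m => (hcont ((m : ℝ) * θ) (mul_nonneg (Nat.cast_nonneg _) hθ.le)).intervalIntegrable
  intro n k
  rw [D_iter_eq_sum]
  have step1 : ∀ j ∈ Finset.range (n + 1),
      (-1 : ℝ) ^ j * (n.choose j : ℝ)
          * ∫ t in ε..1, (t ^ 2 * (1 + ((k + j : ℕ) : ℝ) * θ * t ^ 2))⁻¹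
        = ∫ t in ε..1,
            (-1 : ℝ) ^ j * (n.choose j : ℝ) * (t ^ 2 * (1 + ((k + j : ℕ) : ℝ) * θ * t ^ 2))⁻¹ := by
    intro j _
    rw [intervalIntegral.integral_const_mul]
  rw [Finset.sum_congr rfl step1]
  rw [← intervalIntegral.integral_finset_sum (s := Finset.range (n + 1))
    (f := fun (j : ℕ) (t : ℝ) => (-1 : ℝ) ^ j * (n.choose j : ℝ)
      * (t ^ 2 * (1 + ((k + j : ℕ) : ℝ) * θ * t ^ 2))⁻¹)
    (fun j _ => ((hint (k + j)).const_mul _))]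
  refine intervalIntegral.integral_nonneg hε1 ?_
  intro t ht
  have ht0 : 0 < t := lt_of_lt_of_le hε ht.1
  have hc : (0 : ℝ) ≤ θ * t ^ 2 := by positivity
  have key : ∀ j : ℕ, (-1 : ℝ) ^ j * (n.choose j : ℝ)
        * (t ^ 2 * (1 + ((k + j : ℕ) : ℝ) * θ * t ^ 2))⁻¹
      = (t ^ 2)⁻¹ * ((-1 : ℝ) ^ j * (n.choose j : ℝ)
        * (1 / (1 + ((k + j : ℕ) : ℝ) * (θ * t ^ 2)))) := by
    intro j
    rw [mul_inv, one_div, ← mul_assoc ((k + j : ℕ) : ℝ) θ (t ^ 2)]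
    ring
  simp only [key]
  rw [← Finset.mul_sum]
  refine mul_nonneg (by positivity) ?_
  have := TM_invLinear (θ * t ^ 2) hc n k
  rwa [D_iter_eq_sum] at this

end CondCov

namespace CondCov

lemma TM.mul' {a b : ℕ → ℝ} (ha : TM a) (hb : TM b) : TM (fun k => a k * b k) := TM.mul ha hb

lemma TM.add' {a b : ℕ → ℝ} (ha : TM a) (hb : TM b) : TM (fun k => a k + b k) := TM.add ha hb

lemma TM.pow {a : ℕ → ℝ} (ha : TM a) (m : ℕ) : TM (fun k => a k ^ m) := by
  induction m with
  | zero => simpa using TM.const 1 zero_le_one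
  | succ m ih =>
    have := TM.mul' ha ih
    simpa [pow_succ, mul_comm] using this

lemma TM.sum {f : ℕ → ℕ → ℝ} (N : ℕ) (h : ∀ m, TM (f m)) :
    TM (fun k => ∑ m ∈ Finset.range N, f m k) := by
  induction N with
  | zero => simpa using TM.const 0 le_rfl
  | succ N ih =>
    have := TM.add' ih (h N)
    simpa [Finset.sum_range_succ] using this

lemma TM_phi {θ ε : ℝ} (hθ : 0 < θ) (hε : 0 < ε) (hε1 : ε ≤ 1) :
    TM (fun k : ℕ => (1 + Real.sqrt (k * θ) * Real.arctan (Real.sqrt (k * θ))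
        - Real.sqrt (k * θ) * Real.arctan (ε * Real.sqrt (k * θ)))⁻¹) := by
  set L : ℕ → ℝ := fun k => ∫ t in ε..1, (t ^ 2 * (1 + (k : ℝ) * θ * t ^ 2))⁻¹ with hL
  have hs : ∀ k : ℕ, (0 : ℝ) ≤ (k : ℝ) * θ := fun k => mul_nonneg (Nat.cast_nonneg _) hθ.le
  have hLval : ∀ k : ℕ, L k = (ε⁻¹ - 1)
      - (Real.sqrt (k * θ) * Real.arctan (Real.sqrt (k * θ))
        - Real.sqrt (k * θ) * Real.arctan (ε * Real.sqrt (k * θ))) := by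
    intro k
    exact integral_L ((k : ℝ) * θ) (hs k) hε hε1
  have hR : ∀ k : ℕ, (0 : ℝ) ≤ Real.sqrt (k * θ) * Real.arctan (Real.sqrt (k * θ))
        - Real.sqrt (k * θ) * Real.arctan (ε * Real.sqrt (k * θ)) := by
    intro k
    have h1 : Real.arctan (ε * Real.sqrt (k * θ)) ≤ Real.arctan (Real.sqrt (k * θ)) := by
      refine Real.arctan_strictMono.monotone ?_
      nlinarith [Real.sqrt_nonneg ((k : ℝ) * θ)]
    nlinarith [Real.sqrt_nonneg ((k : ℝ) * θ)]
  have hL0 : ∀ k, 0 ≤ L k := by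
    intro k
    refine intervalIntegral.integral_nonneg hε1 fun t ht => ?_
    have ht0 : 0 < t := lt_of_lt_of_le hε ht.1
    have : (0 : ℝ) < 1 + (k : ℝ) * θ * t ^ 2 := by nlinarith [hs k]
    positivity
  have hLM : ∀ k, L k ≤ ε⁻¹ - 1 := by
    intro k
    rw [hLval k]
    linarith [hR k]
  have hεL : ∀ k, ε * L k < 1 := by
    intro k
    have h2 : ε * L k ≤ ε * (ε⁻¹ - 1) := by
      exact mul_le_mul_of_nonneg_left (hLM k) hε.le
    have h3 : ε * (ε⁻¹ - 1) = 1 - ε := by field_simp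
    linarith
  -- the target function as a geometric series
  have hgeom : ∀ k : ℕ, HasSum (fun m : ℕ => ε * (ε * L k) ^ m)
      ((1 + Real.sqrt (k * θ) * Real.arctan (Real.sqrt (k * θ))
        - Real.sqrt (k * θ) * Real.arctan (ε * Real.sqrt (k * θ)))⁻¹) := by
    intro k
    have h0 : 0 ≤ ε * L k := mul_nonneg hε.le (hL0 k)
    have hgs := hasSum_geometric_of_lt_one h0 (hεL k)
    have := hgs.mul_left ε
    have hne : 1 - ε * L k ≠ 0 := by linarith [hεL k]
    have heq : ε * (1 - ε * L k)⁻¹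
        = (1 + Real.sqrt (k * θ) * Real.arctan (Real.sqrt (k * θ))
          - Real.sqrt (k * θ) * Real.arctan (ε * Real.sqrt (k * θ)))⁻¹ := by
      have hd : 1 + Real.sqrt (k * θ) * Real.arctan (Real.sqrt (k * θ))
          - Real.sqrt (k * θ) * Real.arctan (ε * Real.sqrt (k * θ)) = ε⁻¹ - L k := by
        rw [hLval k]; ring
      rw [hd]
      rw [eq_comm, inv_eq_iff_eq_inv, eq_comm]
      field_simp
    rwa [heq] at this
  refine TM.of_tendsto (f := fun N k => ∑ m ∈ Finset.range N, ε * (ε * L k) ^ m) ?_ ?_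
  · intro N
    refine TM.sum N fun m => ?_
    have hTML : TM L := TM_L hθ hε hε1
    have := TM.mul' (TM.const ε hε.le) (TM.pow (TM.mul' (TM.const ε hε.le) hTML) m)
    simpa using this
  · intro k
    exact (hgeom k).tendsto_sum_nat

end CondCov

namespace CondCov

lemma TM_c {θ : ℝ} (hθ : 0 < θ) :
    TM (fun k : ℕ => (1 + Real.sqrt (k * θ) * Real.arctan (Real.sqrt (k * θ)))⁻¹) := by
  refine TM.of_tendsto
    (f := fun (i : ℕ) (k : ℕ) => (1 + Real.sqrt (k * θ) * Real.arctan (Real.sqrt (k * θ))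
      - Real.sqrt (k * θ) * Real.arctan (((i : ℝ) + 2)⁻¹ * Real.sqrt (k * θ)))⁻¹) ?_ ?_
  · intro i
    have hpos : (0 : ℝ) < ((i : ℝ) + 2)⁻¹ := by positivity
    have hle : ((i : ℝ) + 2)⁻¹ ≤ 1 := by
      have h2 : (1 : ℝ) ≤ (i : ℝ) + 2 := by
        have := Nat.cast_nonneg (α := ℝ) i
        linarith
      exact inv_le_one_of_one_le₀ h2
    exact TM_phi hθ hpos hle
  · intro k
    have h0 : Filter.Tendsto (fun i : ℕ => (i : ℝ) + 2) Filter.atTop Filter.atTop :=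
      Filter.tendsto_atTop_add_const_right _ 2 tendsto_natCast_atTop_atTop
    have h1 : Filter.Tendsto (fun i : ℕ => ((i : ℝ) + 2)⁻¹) Filter.atTop (nhds 0) :=
      tendsto_inv_atTop_zero.comp h0
    have h2 : Filter.Tendsto (fun i : ℕ => ((i : ℝ) + 2)⁻¹ * Real.sqrt (k * θ))
        Filter.atTop (nhds 0) := by
      simpa using h1.mul_const (Real.sqrt (k * θ))
    have h3 : Filter.Tendsto
        (fun i : ℕ => Real.arctan (((i : ℝ) + 2)⁻¹ * Real.sqrt (k * θ)))
        Filter.atTop (nhds 0) := by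
      have := (Real.continuous_arctan.tendsto 0).comp h2
      simpa [Real.arctan_zero, Function.comp_def] using this
    have h4 : Filter.Tendsto
        (fun i : ℕ => 1 + Real.sqrt (k * θ) * Real.arctan (Real.sqrt (k * θ))
          - Real.sqrt (k * θ) * Real.arctan (((i : ℝ) + 2)⁻¹ * Real.sqrt (k * θ)))
        Filter.atTop (nhds (1 + Real.sqrt (k * θ) * Real.arctan (Real.sqrt (k * θ)))) := by
      have hc : Filter.Tendsto (fun _ : ℕ => 1 + Real.sqrt (k * θ)
          * Real.arctan (Real.sqrt (k * θ))) Filter.atTop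
          (nhds (1 + Real.sqrt (k * θ) * Real.arctan (Real.sqrt (k * θ)))) :=
        tendsto_const_nhds
      have hc2 : Filter.Tendsto (fun _ : ℕ => Real.sqrt (k * θ)) Filter.atTop
          (nhds (Real.sqrt (k * θ))) := tendsto_const_nhds
      have h5 := hc.sub (hc2.mul h3)
      simpa using h5
    have hne : 1 + Real.sqrt (k * θ) * Real.arctan (Real.sqrt (k * θ)) ≠ 0 := by
      have hs : (0 : ℝ) ≤ Real.sqrt (k * θ) := Real.sqrt_nonneg _
      have ha : (0 : ℝ) ≤ Real.arctan (Real.sqrt (k * θ)) := by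
        have := Real.arctan_strictMono.monotone hs
        simpa [Real.arctan_zero] using this
      nlinarith
    exact h4.inv₀ hne

lemma D_iter_le_head {c : ℕ → ℝ} (h : TM c) (m : ℕ) : D^[m] c 0 ≤ c 0 := by
  induction m with
  | zero => exact le_rfl
  | succ m ih =>
    rw [Function.iterate_succ_apply']
    show D^[m] c 0 - D^[m] c 1 ≤ c 0
    have := h m 1
    linarith

end CondCov

/-- The conditional coverage probability with `n` competing users in the
interference-limited case (`σ² = 0`, `α = 4`). -/
noncomputable def condCoverage (n : ℕ) (θ : ℝ) : ℝ :=
  ∑ k ∈ Finset.Icc 1 (n + 1),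
    ((n + 1).choose k : ℝ) * (-1) ^ (k + 1)
      / (1 + Real.sqrt (k * θ) * Real.arctan (Real.sqrt (k * θ)))

/-- `p(n,θ)` lies in `[0,1]` and is nondecreasing in the number of competing users `n`. -/
theorem condCoverage_mem_unit_and_monotone (θ : ℝ) (hθ : 0 < θ) :
    (∀ n : ℕ, 0 ≤ condCoverage n θ ∧ condCoverage n θ ≤ 1) ∧
      Monotone (fun n => condCoverage n θ) := by
  set c : ℕ → ℝ := fun k => (1 + Real.sqrt (k * θ) * Real.arctan (Real.sqrt (k * θ)))⁻¹ with hc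
  have htm : CondCov.TM c := CondCov.TM_c hθ
  have hc0 : c 0 = 1 := by simp [hc]
  have key : ∀ n : ℕ, condCoverage n θ = 1 - CondCov.D^[n + 1] c 0 := by
    intro n
    rw [CondCov.D_iter_eq_sum, Finset.sum_range_succ']
    have hT : (-1 : ℝ) ^ 0 * ((n + 1).choose 0 : ℝ) * c (0 + 0) = 1 := by
      simp [hc0]
    rw [hT]
    unfold condCoverage
    rw [show Finset.Icc 1 (n + 1) = Finset.Ico 1 (n + 2) from (Finset.Ico_add_one_right_eq_Icc 1 (n+1)).symm,
      Finset.sum_Ico_eq_sum_range]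
    simp only [show n + 2 - 1 = n + 1 from rfl]
    rw [eq_sub_iff_add_eq]
    have hterm : ∀ j ∈ Finset.range (n + 1),
        (((n + 1).choose (1 + j) : ℕ) : ℝ) * (-1) ^ (1 + j + 1)
            / (1 + Real.sqrt (((1 + j : ℕ) : ℝ) * θ) * Real.arctan (Real.sqrt (((1 + j : ℕ) : ℝ) * θ)))
          = -((-1) ^ (j + 1) * (((n + 1).choose (j + 1) : ℕ) : ℝ) * c (0 + (j + 1))) := by
      intro j _
      rw [show (0 + (j + 1)) = 1 + j by omega]
      rw [show (n + 1).choose (j + 1) = (n + 1).choose (1 + j) by rw [Nat.add_comm j 1]]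
      simp only [hc]
      rw [div_eq_mul_inv]
      rw [show j + 1 = 1 + j by omega]
      ring
    rw [Finset.sum_congr rfl hterm]
    rw [Finset.sum_neg_distrib]
    ring
  have h1 : ∀ n : ℕ, 0 ≤ condCoverage n θ ∧ condCoverage n θ ≤ 1 := by
    intro n
    constructor
    · rw [key n]
      have := CondCov.D_iter_le_head htm (n + 1)
      rw [hc0] at this
      linarith
    · rw [key n]
      have := htm (n + 1) 0
      linarith
  refine ⟨h1, monotone_nat_of_le_succ fun n => ?_⟩
  rw [key n, key (n + 1)]
  have hstep : CondCov.D^[n + 2] c 0 = CondCov.D^[n + 1] c 0 - CondCov.D^[n + 1] c 1 := by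
    rw [Function.iterate_succ_apply']
    rfl
  have := htm (n + 1) 1
  rw [hstep]
  linarith
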